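/- arXiv:1410.0262 — 3 statements merged into one kernel-verified Lean document; each statement's English description precedes it below -/
import Mathlib

section
/- Let U be an invertible upper triangular N×N matrix and M any N×N matrix. Then for all 1 ≤ i ≤ N and 1 ≤ j ≤ N, the rank of the south-west submatrix is preserved under conjugation: rk((U M U⁻¹)_{i:N, 1:j}) = rk(M_{i:N, 1:j}), where A_{i:N,1:j} denotes the submatrix of A with rows i,…,N and columns 1,…,j. -/
/-- The south-west justified submatrix of `M` on rows `i, …, N` and columns `1, …, j`. -/
def swSub {N : ℕ} (M : Matrix (Fin N) (Fin N) ℂ) (i j : Fin N) :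
    Matrix {a : Fin N // i ≤ a} {b : Fin N // b ≤ j} ℂ :=
  M.submatrix (fun a => (a : Fin N)) (fun b => (b : Fin N))

/-- A principal subblock of an invertible upper triangular matrix has unit determinant. -/
lemma aux_block_det_unit {N : ℕ} (V : Matrix (Fin N) (Fin N) ℂ) (hV : IsUnit V.det)
    (htri : ∀ i j : Fin N, j < i → V i j = 0) (p : Fin N → Prop) [DecidablePred p] :
    IsUnit ((V.toBlock p p).det) := by
  have hVt : V.BlockTriangular id := fun a b h => htri a b h
  have hdet : V.det = ∏ a : Fin N, V a a := Matrix.det_of_upperTriangular hVt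
  have hdiag : ∀ a : Fin N, V a a ≠ 0 := by
    rw [hdet, isUnit_iff_ne_zero, Finset.prod_ne_zero_iff] at hV
    exact fun a => hV a (Finset.mem_univ a)
  have hbt : (V.toBlock p p).BlockTriangular id := by
    intro a b h
    exact htri a b (by exact_mod_cast h)
  rw [Matrix.det_of_upperTriangular hbt, isUnit_iff_ne_zero, Finset.prod_ne_zero_iff]
  exact fun a _ => hdiag a

/-- conjugation by an invertible upper triangular matrix preserves the
ranks of all south-west justified submatrices. -/
theorem stmt_9 (N : ℕ) (U M : Matrix (Fin N) (Fin N) ℂ)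
    (hU : IsUnit U) (hUtri : ∀ i j : Fin N, j < i → U i j = 0) :
    ∀ i j : Fin N, (swSub (U * M * U⁻¹) i j).rank = (swSub M i j).rank := by
  intro i j
  have hUdet : IsUnit U.det := (Matrix.isUnit_iff_isUnit_det U).mp hU
  haveI : Invertible U := U.invertibleOfIsUnitDet hUdet
  have hUt : U.BlockTriangular id := fun a b h => hUtri a b h
  have hUit : U⁻¹.BlockTriangular id := Matrix.blockTriangular_inv_of_blockTriangular hUt
  have hUitri : ∀ a b : Fin N, b < a → U⁻¹ a b = 0 := fun a b h => hUit h
  have hUidet : IsUnit (U⁻¹).det := by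
    exact (Matrix.isUnit_iff_isUnit_det _).mp (isUnit_of_invertible _)
  set p : Fin N → Prop := fun a => i ≤ a with hp
  set q : Fin N → Prop := fun b => b ≤ j with hq
  have h1 : (U * (M * U⁻¹)).toBlock p q
      = U.toBlock p p * (M * U⁻¹).toBlock p q := by
    rw [Matrix.toBlock_mul_eq_add p p q U (M * U⁻¹)]
    have : (U.toBlock p fun c => ¬ p c) = 0 := by
      ext a c
      exact hUtri a c (lt_of_lt_of_le (lt_of_not_ge c.2) a.2)
    rw [this, Matrix.zero_mul, add_zero]
  have h2 : (M * U⁻¹).toBlock p q = M.toBlock p q * U⁻¹.toBlock q q := by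
    rw [Matrix.toBlock_mul_eq_add p q q M U⁻¹]
    have : ((U⁻¹).toBlock (fun c => ¬ q c) q) = 0 := by
      ext c b
      exact hUitri c b (lt_of_le_of_lt b.2 (lt_of_not_ge c.2))
    rw [this, Matrix.mul_zero, add_zero]
  have key : swSub (U * M * U⁻¹) i j
      = U.toBlock p p * (M.toBlock p q * U⁻¹.toBlock q q) := by
    show (U * M * U⁻¹).toBlock p q = _
    rw [Matrix.mul_assoc, h1, h2]
  rw [key,
    Matrix.rank_mul_eq_right_of_isUnit_det _ _ (aux_block_det_unit U hUdet hUtri p),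
    Matrix.rank_mul_eq_left_of_isUnit_det _ _ (aux_block_det_unit U⁻¹ hUidet hUitri q)]
  rfl
end

section
/- Let π ∈ Inv^i_N be an involution of {1,…,N} with π(i) = N − π(N−i+1) + 1, N = 2n. Define the N×N matrix π^i_< by (π^i_<)_{ij} = 0 if j ≤ i, (π^i_<)_{ij} = −δ_{i,π(j)} if n < i < j, and (π^i_<)_{ij} = δ_{i,π(j)} otherwise. Then (π^i_<)² = 0 and π^i_< lies in the symplectic Lie algebra, i.e. J·π^i_< + (π^i_<)ᵀ·J = 0, where J is the antidiagonal symplectic form. -/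
/-- The antidiagonal symplectic form `J` on `ℂ^(2n)` (0-based indices). -/
noncomputable def symJ (n : ℕ) : Matrix (Fin (2*n)) (Fin (2*n)) ℂ :=
  Matrix.of fun i j =>
    if (i : ℕ) + (j : ℕ) = 2*n - 1 then (if (i : ℕ) < n then 1 else -1) else 0

/-- The matrix `π^i_<` associated to an involution `π`: `(π^i_<)_{ij} = 0` if `j ≤ i`,
`-δ_{i,π(j)}` if `n < i < j` (1-based; i.e. `n ≤ i < j` 0-based), and `δ_{i,π(j)}`
otherwise. -/
noncomputable def piLess (n : ℕ) (π : Equiv.Perm (Fin (2*n))) :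
    Matrix (Fin (2*n)) (Fin (2*n)) ℂ :=
  Matrix.of fun i j =>
    if (j : ℕ) ≤ (i : ℕ) then 0
    else if n ≤ (i : ℕ) ∧ (i : ℕ) < (j : ℕ) then (if π j = i then -1 else 0)
    else (if π j = i then 1 else 0)

lemma piLess_apply (n : ℕ) (π : Equiv.Perm (Fin (2*n))) (i j : Fin (2*n)) :
    piLess n π i j =
      if (i:ℕ) < (j:ℕ) ∧ π j = i then (if (i:ℕ) < n then 1 else -1) else 0 := by
  simp only [piLess, Matrix.of_apply]
  split_ifs <;> simp_all <;> omega

/-- for `π ∈ Inv^i_N` (an involution equivariant under the reflection,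
expressed 0-based as `π i = (π i.rev).rev`), the matrix `π^i_<` squares to zero and
lies in the symplectic Lie algebra: `J·π^i_< + (π^i_<)ᵀ·J = 0`. -/
theorem stmt_12 (n : ℕ) (hn : 0 < n) (π : Equiv.Perm (Fin (2*n)))
    (hinv : ∀ i, π (π i) = i) (hsym : ∀ i, π i = (π i.rev).rev) :
    piLess n π * piLess n π = 0 ∧
    symJ n * piLess n π + (piLess n π).transpose * symJ n = 0 := by
  have hrev : ∀ i, π i.rev = (π i).rev := by
    intro i
    have := hsym i.rev
    rwa [Fin.rev_rev] at this
  constructor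
  · ext i k
    rw [Matrix.mul_apply]
    simp only [Matrix.zero_apply]
    apply Finset.sum_eq_zero
    intro j _
    rw [piLess_apply, piLess_apply]
    by_cases h1 : (i:ℕ) < (j:ℕ) ∧ π j = i
    · rw [if_pos h1]
      by_cases h2 : (j:ℕ) < (k:ℕ) ∧ π k = j
      · exfalso
        have hik : π (π k) = i := by rw [h2.2, h1.2]
        rw [hinv] at hik
        have : (k:ℕ) = (i:ℕ) := by rw [hik]
        have := h1.1
        have := h2.1
        omega
      · rw [if_neg h2, mul_zero]
    · rw [if_neg h1, zero_mul]
  · ext i k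
    rw [Matrix.add_apply, Matrix.mul_apply, Matrix.mul_apply]
    simp only [Matrix.zero_apply, Matrix.transpose_apply]
    have hi2 := i.isLt
    have hk2 := k.isLt
    have hvri : ((i.rev : Fin (2*n)) : ℕ) = 2*n - (↑i + 1) := Fin.val_rev i
    have hvrk : ((k.rev : Fin (2*n)) : ℕ) = 2*n - (↑k + 1) := Fin.val_rev k
    have hs1 : ∑ j, symJ n i j * piLess n π j k
        = (if (i:ℕ) < n then 1 else -1) * piLess n π i.rev k := by
      rw [Finset.sum_eq_single i.rev]
      · simp only [symJ, Matrix.of_apply]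
        rw [if_pos]
        omega
      · intro b _ hb
        simp only [symJ, Matrix.of_apply]
        rw [if_neg, zero_mul]
        intro h
        apply hb
        have hb2 := b.isLt
        apply Fin.ext
        omega
      · intro h; exact absurd (Finset.mem_univ _) h
    have hs2 : ∑ j, piLess n π j i * symJ n j k
        = piLess n π k.rev i * (if ((k.rev :Fin (2*n)):ℕ) < n then 1 else -1) := by
      rw [Finset.sum_eq_single k.rev]
      · simp only [symJ, Matrix.of_apply]
        rw [if_pos]
        omega
      · intro b _ hb
        simp only [symJ, Matrix.of_apply]
        rw [if_neg, mul_zero]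
        intro h
        apply hb
        have hb2 := b.isLt
        apply Fin.ext
        omega
      · intro h; exact absurd (Finset.mem_univ _) h
    rw [hs1, hs2, piLess_apply, piLess_apply]
    by_cases hc : ((i.rev : Fin (2*n)) : ℕ) < (k:ℕ) ∧ π k = i.rev
    · have hk' : k = (π i).rev := by
        calc k = π (π k) := (hinv k).symm
        _ = π i.rev := by rw [hc.2]
        _ = (π i).rev := hrev i
      have hc2 : ((k.rev : Fin (2*n)) : ℕ) < (i:ℕ) ∧ π i = k.rev := by
        refine ⟨by omega, ?_⟩
        rw [hk', Fin.rev_rev]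
      rw [if_pos hc, if_pos hc2]
      have e1 : (if (i:ℕ) < n then (1:ℂ) else -1) *
          (if ((i.rev : Fin (2*n)):ℕ) < n then (1:ℂ) else -1) = -1 := by
        by_cases hin : (i:ℕ) < n
        · rw [if_pos hin, if_neg (by omega)]; ring
        · rw [if_neg hin, if_pos (by omega)]; ring
      have e2 : (if ((k.rev : Fin (2*n)):ℕ) < n then (1:ℂ) else -1) *
          (if ((k.rev : Fin (2*n)):ℕ) < n then (1:ℂ) else -1) = 1 := by
        split_ifs <;> ring
      rw [e1, e2]; ring
    · have hc2 : ¬ (((k.rev : Fin (2*n)) : ℕ) < (i:ℕ) ∧ π i = k.rev) := by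
        rintro ⟨h1, h2⟩
        apply hc
        have hi' : i = (π k).rev := by
          calc i = π (π i) := (hinv i).symm
          _ = π k.rev := by rw [h2]
          _ = (π k).rev := hrev k
        refine ⟨by omega, ?_⟩
        rw [hi', Fin.rev_rev]
      rw [if_neg hc, if_neg hc2]
      simp
end

section
/- Let b(x,y) = (A² − (x−y)²)(A² − (x+y)²)/(x² − y²) as a rational function in variables x, y, A. Then b is antisymmetric: b(x,y) = −b(y,x), and the product ∏_{1≤i<j≤L} b(z_i,z_j) times the Pfaffian Pf[1/b(z_i,z_j)]_{1≤i,j≤L} (L even) is a polynomial in z_1,…,z_L, A that is symmetric under permutations of the z_i. -/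
open MvPolynomial

/-- The field of rational functions in the variables `z_1, …, z_L` (indexed by
`some i`) and `A` (indexed by `none`). -/
abbrev RatFld (L : ℕ) := FractionRing (MvPolynomial (Option (Fin L)) ℚ)

/-- The variable `z i` as a rational function. -/
noncomputable def zVar (L : ℕ) (i : Fin L) : RatFld L :=
  algebraMap (MvPolynomial (Option (Fin L)) ℚ) (RatFld L) (X (some i))

/-- The variable `A` as a rational function. -/
noncomputable def AVar (L : ℕ) : RatFld L :=
  algebraMap (MvPolynomial (Option (Fin L)) ℚ) (RatFld L) (X none)

/-- `b(x,y) = (A² - (x-y)²)(A² - (x+y)²)/(x² - y²)`. -/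
noncomputable def bFun (L : ℕ) (x y : RatFld L) : RatFld L :=
  ((AVar L)^2 - (x - y)^2) * ((AVar L)^2 - (x + y)^2) / (x^2 - y^2)

/-- The Pfaffian of a `2m × 2m` matrix, via the sum-over-permutations formula
`Pf(A) = (2^m m!)⁻¹ Σ_σ sgn(σ) Π_i A_{σ(2i-1), σ(2i)}` (valid in characteristic `0`). -/
noncomputable def pfaffian {K : Type*} [Field K] {m : ℕ}
    (A : Matrix (Fin (2*m)) (Fin (2*m)) K) : K :=
  ((2^m * (Nat.factorial m) : ℕ) : K)⁻¹ *
    ∑ σ : Equiv.Perm (Fin (2*m)), ((Equiv.Perm.sign σ : ℤ) : K) *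
      ∏ i : Fin m, A (σ ⟨2*(i : ℕ), by have := i.isLt; omega⟩)
                     (σ ⟨2*(i : ℕ) + 1, by have := i.isLt; omega⟩)

namespace Stmt13

open Finset

abbrev R (L : ℕ) := MvPolynomial (Option (Fin L)) ℚ

noncomputable def xv (L : ℕ) (i : Fin L) : R L := X (some i)
noncomputable def av (L : ℕ) : R L := X none

noncomputable def Np (L : ℕ) (i j : Fin L) : R L :=
  ((av L)^2 - (xv L i - xv L j)^2) * ((av L)^2 - (xv L i + xv L j)^2)
noncomputable def dp (L : ℕ) (i j : Fin L) : R L := (xv L i)^2 - (xv L j)^2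

def pairs (L : ℕ) : Finset (Fin L × Fin L) := univ.filter (fun q => q.1 < q.2)

noncomputable def Dp (L : ℕ) : R L := ∏ q ∈ pairs L, dp L q.1 q.2

lemma Np_symm (L : ℕ) (i j : Fin L) : Np L i j = Np L j i := by unfold Np; ring

lemma dp_antisymm (L : ℕ) (i j : Fin L) : dp L i j = - dp L j i := by unfold dp; ring

lemma dp_ne_zero (L : ℕ) {i j : Fin L} (h : i ≠ j) : dp L i j ≠ 0 := by
  intro hz
  have := congrArg (aeval (fun t : Option (Fin L) => if t = some i then (1:ℚ) else 0)) hz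
  simp [dp, xv, h, h.symm] at this

lemma Np_ne_zero (L : ℕ) (i j : Fin L) : Np L i j ≠ 0 := by
  intro hz
  have := congrArg (aeval (fun t : Option (Fin L) => if t = none then (1:ℚ) else 0)) hz
  simp [Np, xv, av] at this

lemma Dp_ne_zero (L : ℕ) : Dp L ≠ 0 := by
  unfold Dp
  refine Finset.prod_ne_zero_iff.2 (fun q hq => ?_)
  exact dp_ne_zero L (Fin.ne_of_lt (by simpa [pairs] using hq))

def sp {L : ℕ} (p : Fin L × Fin L) : Fin L × Fin L := if p.1 < p.2 then p else (p.2, p.1)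

lemma sp_mem_pairs {L : ℕ} (p : Fin L × Fin L) (h : p.1 ≠ p.2) : sp p ∈ pairs L := by
  unfold sp pairs
  rcases lt_or_gt_of_ne h with h1 | h1
  · simp [h1]
  · simp [not_lt_of_gt h1, h1]


lemma sp_spec {L : ℕ} (p : Fin L × Fin L) : sp p = p ∨ sp p = (p.2, p.1) := by
  unfold sp; split_ifs <;> [exact Or.inl rfl; exact Or.inr rfl]

lemma sp_of_lt {L : ℕ} {p : Fin L × Fin L} (h : p.1 < p.2) : sp p = p := if_pos h

lemma mem_pairs {L : ℕ} {q : Fin L × Fin L} : q ∈ pairs L ↔ q.1 < q.2 := by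
  simp [pairs]

variable {n : ℕ} {M₀ : Type*} [CommMonoid M₀]

lemma prod_pairs_eq (f : Fin n → Fin n → M₀) :
    ∏ q ∈ pairs n, f q.1 q.2 = ∏ i : Fin n, ∏ j ∈ Finset.Ioi i, f i j := by
  rw [Finset.prod_sigma']
  refine Finset.prod_bij (fun (q : Fin n × Fin n) (_ : q ∈ pairs n) => (⟨q.1, q.2⟩ : Σ _ : Fin n, Fin n)) ?_ ?_ ?_ ?_
  · intro q hq
    simp only [Finset.mem_sigma, Finset.mem_Ioi]
    exact ⟨Finset.mem_univ _, mem_pairs.1 hq⟩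
  · intro q _ q' _ h
    simp only [Sigma.mk.inj_iff, heq_eq_eq] at h
    exact Prod.ext h.1 h.2
  · rintro ⟨i, j⟩ hx
    simp only [Finset.mem_sigma, Finset.mem_Ioi] at hx
    exact ⟨(i, j), mem_pairs.2 hx.2, rfl⟩
  · intros; rfl

/-- reindexing a product over pairs along a permutation, for symmetric `g` -/
lemma prod_pairs_perm (g : Fin n → Fin n → M₀) (hg : ∀ a b, g a b = g b a)
    (σ : Equiv.Perm (Fin n)) :
    ∏ q ∈ pairs n, g (σ q.1) (σ q.2) = ∏ q ∈ pairs n, g q.1 q.2 := by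
  refine Finset.prod_bij (fun (q : Fin n × Fin n) (_ : q ∈ pairs n) => sp (σ q.1, σ q.2)) ?_ ?_ ?_ ?_
  · intro q hq
    exact sp_mem_pairs _ (fun h => absurd (σ.injective h) (Fin.ne_of_lt (mem_pairs.1 hq)))
  · intro q hq q' hq' h
    have h1 := mem_pairs.1 hq
    have h2 := mem_pairs.1 hq'
    rcases sp_spec (σ q.1, σ q.2) with e1 | e1 <;> rcases sp_spec (σ q'.1, σ q'.2) with e2 | e2 <;>
        rw [e1, e2] at h <;> simp only [Prod.mk.injEq] at h <;>
        obtain ⟨ha, hb⟩ := h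
    · exact Prod.ext (σ.injective ha) (σ.injective hb)
    · have ea := σ.injective ha; have eb := σ.injective hb
      rw [ea] at h1; rw [← eb] at h2
      exact absurd (h1.trans h2) (lt_irrefl _)
    · have ea := σ.injective ha; have eb := σ.injective hb
      rw [eb] at h1; rw [← ea] at h2
      exact absurd (h1.trans h2) (lt_irrefl _)
    · exact Prod.ext (σ.injective hb) (σ.injective ha)
  · intro q hq
    have h1 := mem_pairs.1 hq
    refine ⟨sp (σ.symm q.1, σ.symm q.2), sp_mem_pairs _ (fun h => absurd (σ.symm.injective h) (Fin.ne_of_lt h1)), ?_⟩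
    rcases sp_spec (σ.symm q.1, σ.symm q.2) with e | e <;> rw [e] <;>
      simp only [Equiv.apply_symm_apply] <;> unfold sp <;> dsimp only
    · rw [if_pos h1]
    · rw [if_neg (not_lt_of_gt h1)]
  · intro q hq
    rcases sp_spec (σ q.1, σ q.2) with e | e <;> rw [e] <;> exact hg _ _

/-- Vandermonde-type sign identity -/
lemma prod_pairs_sub_perm {Rc : Type*} [CommRing Rc] (v : Fin n → Rc) (σ : Equiv.Perm (Fin n)) :
    ∏ q ∈ pairs n, (v (σ q.1) - v (σ q.2))
      = ((Equiv.Perm.sign σ : ℤ) : Rc) * ∏ q ∈ pairs n, (v q.1 - v q.2) := by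
  have key : ∀ w : Fin n → Rc,
      ∏ q ∈ pairs n, (w q.1 - w q.2) = (-1)^(pairs n).card * (Matrix.vandermonde w).det := by
    intro w
    rw [Matrix.det_vandermonde, ← prod_pairs_eq (fun i j => w j - w i), ← Finset.prod_const,
      ← Finset.prod_mul_distrib]
    exact Finset.prod_congr rfl (fun q _ => by ring)
  calc ∏ q ∈ pairs n, (v (σ q.1) - v (σ q.2))
      = (-1)^(pairs n).card * (Matrix.vandermonde (fun i => v (σ i))).det := key (fun i => v (σ i))
    _ = (-1)^(pairs n).card * (((Equiv.Perm.sign σ : ℤ) : Rc) * (Matrix.vandermonde v).det) := by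
        congr 1
        have hv : Matrix.vandermonde (fun i => v (σ i)) = (Matrix.vandermonde v).submatrix σ id := by
          funext i j; rfl
        rw [hv, Matrix.det_permute]
    _ = ((Equiv.Perm.sign σ : ℤ) : Rc) * ∏ q ∈ pairs n, (v q.1 - v q.2) := by
        rw [key v]; ring


-- (assume p1 contents present; here standalone for testing)


variable {m : ℕ}

def i0 (m : ℕ) (k : Fin m) : Fin (2*m) := ⟨2*(k:ℕ), by have := k.isLt; omega⟩
def i1 (m : ℕ) (k : Fin m) : Fin (2*m) := ⟨2*(k:ℕ)+1, by have := k.isLt; omega⟩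

lemma i0_ne_i1 (k k' : Fin m) : i0 m k ≠ i1 m k' := by
  simp only [i0, i1, Fin.mk.injEq, ne_eq]; omega

lemma i0_inj {k k' : Fin m} (h : i0 m k = i0 m k') : k = k' := by
  simp only [i0, Fin.mk.injEq] at h; exact Fin.ext (by omega)

lemma i1_inj {k k' : Fin m} (h : i1 m k = i1 m k') : k = k' := by
  simp only [i1, Fin.mk.injEq] at h; exact Fin.ext (by omega)


def matched (m : ℕ) (σ : Equiv.Perm (Fin (2*m))) (q : Fin (2*m) × Fin (2*m)) : Prop :=
  ∃ k : Fin m, (σ (i0 m k) = q.1 ∧ σ (i1 m k) = q.2) ∨ (σ (i0 m k) = q.2 ∧ σ (i1 m k) = q.1)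

instance (σ : Equiv.Perm (Fin (2*m))) (q : Fin (2*m) × Fin (2*m)) :
    Decidable (matched m σ q) := by unfold matched; infer_instance

noncomputable def U (m : ℕ) (σ : Equiv.Perm (Fin (2*m))) : R (2*m) :=
  ∏ q ∈ pairs (2*m), if matched m σ q then 1 else Np (2*m) q.1 q.2

noncomputable def T (m : ℕ) (σ : Equiv.Perm (Fin (2*m))) : R (2*m) :=
  (∏ k : Fin m, dp (2*m) (σ (i0 m k)) (σ (i1 m k))) * U m σ

noncomputable def G (m : ℕ) : R (2*m) :=
  ∑ σ : Equiv.Perm (Fin (2*m)), C (((Equiv.Perm.sign σ : ℤ) : ℚ)) * T m σ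

/-- the key combinatorial lemma -/
lemma prod_Np_eq (σ : Equiv.Perm (Fin (2*m))) :
    ∏ q ∈ pairs (2*m), Np (2*m) q.1 q.2
      = (∏ k : Fin m, Np (2*m) (σ (i0 m k)) (σ (i1 m k))) * U m σ := by
  unfold U
  rw [← Finset.prod_filter_mul_prod_filter_not (pairs (2*m)) (matched m σ)]
  congr 1
  · refine (Finset.prod_bij (fun (k : Fin m) (_ : k ∈ univ) => sp (σ (i0 m k), σ (i1 m k))) ?_ ?_ ?_ ?_).symm
    · intro k _
      rw [Finset.mem_filter]
      have hne : σ (i0 m k) ≠ σ (i1 m k) := fun h => i0_ne_i1 k k (σ.injective h)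
      refine ⟨sp_mem_pairs _ hne, ?_⟩
      unfold sp
      dsimp only
      split_ifs with h
      · exact ⟨k, Or.inl ⟨rfl, rfl⟩⟩
      · exact ⟨k, Or.inr ⟨rfl, rfl⟩⟩
    · intro k _ k' _ h
      unfold sp at h
      dsimp only at h
      split_ifs at h with h1 h2 h2 <;> simp only [Prod.mk.injEq] at h
      · exact i0_inj (σ.injective h.1)
      · exact absurd (σ.injective h.1) (i0_ne_i1 k k')
      · exact absurd (σ.injective h.1).symm (i0_ne_i1 k' k)
      · exact i1_inj (σ.injective h.1)
    · rintro q hq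
      rw [Finset.mem_filter] at hq
      obtain ⟨hqp, k, hk | hk⟩ := hq
      · refine ⟨k, Finset.mem_univ _, ?_⟩
        unfold sp
        dsimp only
        rw [hk.1, hk.2]
        have : q.1 < q.2 := by simpa [pairs] using hqp
        simp [this]
      · refine ⟨k, Finset.mem_univ _, ?_⟩
        unfold sp
        dsimp only
        rw [hk.1, hk.2]
        have h2 : q.1 < q.2 := by simpa [pairs] using hqp
        simp [not_lt_of_gt h2, h2]
      
    · intro k _
      unfold sp
      dsimp only
      split_ifs with h
      · rfl
      · exact Np_symm _ _ _
  · rw [Finset.prod_ite, Finset.prod_const_one, one_mul]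



/-- product of pairwise non-associate primes each dividing `g` divides `g` -/
lemma prod_primes_dvd' {α : Type*} [CommMonoidWithZero α] [IsCancelMulZero α] {ι : Type*} [DecidableEq ι]
    (s : Finset ι) (f : ι → α) (g : α)
    (hp : ∀ i ∈ s, Prime (f i)) (hnd : ∀ i ∈ s, ∀ j ∈ s, i ≠ j → ¬ f i ∣ f j)
    (hd : ∀ i ∈ s, f i ∣ g) : (∏ i ∈ s, f i) ∣ g := by
  induction s using Finset.induction_on with
  | empty => simpa using one_dvd g
  | insert a s ha ih =>
    rw [Finset.prod_insert ha]
    obtain ⟨H, hH⟩ := ih (fun i hi => hp i (Finset.mem_insert_of_mem hi))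
      (fun i hi j hj hij => hnd i (Finset.mem_insert_of_mem hi) j (Finset.mem_insert_of_mem hj) hij)
      (fun i hi => hd i (Finset.mem_insert_of_mem hi))
    have hpa := hp a (Finset.mem_insert_self a s)
    have hag : f a ∣ (∏ i ∈ s, f i) * H := hH ▸ hd a (Finset.mem_insert_self a s)
    rcases hpa.dvd_mul.1 hag with h1 | h1
    · obtain ⟨j, hj, hdj⟩ := (Prime.dvd_finset_prod_iff hpa f).1 h1
      exact absurd hdj (hnd a (Finset.mem_insert_self a s) j (Finset.mem_insert_of_mem hj)
        (fun h => ha (h ▸ hj)))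
    · obtain ⟨H', rfl⟩ := h1
      exact ⟨H', by rw [hH, mul_left_comm, mul_assoc]⟩

variable {L : ℕ}

noncomputable def Ψ (L : ℕ) (v0 : Option (Fin L)) :
    R L ≃ₐ[ℚ] Polynomial (MvPolynomial {t : Option (Fin L) // t ≠ v0} ℚ) :=
  (renameEquiv ℚ (Equiv.optionSubtypeNe v0).symm).trans (optionEquivLeft ℚ _)

lemma Psi_X_self (v0 : Option (Fin L)) : Ψ L v0 (X v0) = Polynomial.X := by
  simp [Ψ, Equiv.optionSubtypeNe_symm_self]

lemma Psi_X_ne (v0 : Option (Fin L)) (t : Option (Fin L)) (h : t ≠ v0) :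
    Ψ L v0 (X t) = Polynomial.C (X ⟨t, h⟩) := by
  simp [Ψ, Equiv.optionSubtypeNe_symm_of_ne h]

lemma Psi_C (v0 : Option (Fin L)) (c : ℚ) : Ψ L v0 (C c) = Polynomial.C (C c) := by
  simp [Ψ]

/-- the substitution ring hom -/
noncomputable def ψs (v0 : Option (Fin L)) (r : MvPolynomial {t : Option (Fin L) // t ≠ v0} ℚ) :
    R L →+* MvPolynomial {t : Option (Fin L) // t ≠ v0} ℚ :=
  (Polynomial.evalRingHom r).comp ((Ψ L v0).toAlgHom.toRingHom)

lemma psi_apply (v0 : Option (Fin L)) (r) (f : R L) :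
    ψs v0 r f = Polynomial.eval r (Ψ L v0 f) := rfl

lemma psi_X_self (v0 : Option (Fin L)) (r) : ψs v0 r (X v0) = r := by
  rw [psi_apply, Psi_X_self]; simp

lemma psi_X_ne (v0 : Option (Fin L)) (r) (t) (h : t ≠ v0) : ψs v0 r (X t) = X ⟨t, h⟩ := by
  rw [psi_apply, Psi_X_ne v0 t h]; simp

lemma lin_dvd_iff (v0 : Option (Fin L)) (f : R L) (r) (hf : Ψ L v0 f = Polynomial.X - Polynomial.C r)
    (g : R L) : f ∣ g ↔ ψs v0 r g = 0 := by
  constructor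
  · rintro ⟨h, rfl⟩
    rw [map_mul, psi_apply, hf]
    simp
  · intro h
    have h2 : (Polynomial.X - Polynomial.C r) ∣ Ψ L v0 g := by
      rw [Polynomial.dvd_iff_isRoot]
      simpa [Polynomial.IsRoot, ← psi_apply] using h
    rw [← hf] at h2
    have := map_dvd (Ψ L v0).symm h2
    simpa using this

/-- primality of `X v0 - C c * X w` -/
lemma prime_lin (v0 w : Option (Fin L)) (h : w ≠ v0) (c : ℚ) :
    Prime (X v0 - C c * X w : R L) := by
  have key : Ψ L v0 (X v0 - C c * X w) = Polynomial.X - Polynomial.C (C c * X ⟨w, h⟩) := by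
    rw [map_sub, map_mul, Psi_X_self, Psi_C, Psi_X_ne v0 w h, ← Polynomial.C_mul]
  have : Prime (Polynomial.X - Polynomial.C (C c * X ⟨w, h⟩) :
      Polynomial (MvPolynomial {t : Option (Fin L) // t ≠ v0} ℚ)) :=
    Polynomial.prime_X_sub_C _
  rw [← key] at this
  exact (MulEquiv.prime_iff (Ψ L v0)).1 this


section Cancellation

variable {m : ℕ}

lemma matched_pair_symm (σ : Equiv.Perm (Fin (2*m))) (a b : Fin (2*m)) :
    matched m σ (a, b) ↔ matched m σ (b, a) := by
  unfold matched
  exact ⟨fun ⟨k, h⟩ => ⟨k, h.symm⟩, fun ⟨k, h⟩ => ⟨k, h.symm⟩⟩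

lemma matched_tau (σ : Equiv.Perm (Fin (2*m))) (τ : Equiv.Perm (Fin (2*m))) (a b : Fin (2*m)) :
    matched m (τ * σ) (τ a, τ b) ↔ matched m σ (a, b) := by
  unfold matched
  simp only [Equiv.Perm.mul_apply]
  constructor
  · rintro ⟨k, ⟨h1, h2⟩ | ⟨h1, h2⟩⟩
    · exact ⟨k, Or.inl ⟨τ.injective h1, τ.injective h2⟩⟩
    · exact ⟨k, Or.inr ⟨τ.injective h1, τ.injective h2⟩⟩
  · rintro ⟨k, ⟨h1, h2⟩ | ⟨h1, h2⟩⟩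
    · exact ⟨k, Or.inl ⟨congrArg τ h1, congrArg τ h2⟩⟩
    · exact ⟨k, Or.inr ⟨congrArg τ h1, congrArg τ h2⟩⟩

variable {R' : Type*} [CommRing R']

lemma psi_dp_tau (ψ : R (2*m) →+* R') (τ : Equiv.Perm (Fin (2*m)))
    (h1 : ∀ t, ψ (xv (2*m) (τ t)) = ψ (xv (2*m) t) ∨ ψ (xv (2*m) (τ t)) = - ψ (xv (2*m) t))
    (a b : Fin (2*m)) : ψ (dp (2*m) (τ a) (τ b)) = ψ (dp (2*m) a b) := by
  simp only [dp, map_sub, map_pow]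
  rcases h1 a with ha | ha <;> rcases h1 b with hb | hb <;> rw [ha, hb] <;> ring

lemma psi_Np_tau (ψ : R (2*m) →+* R') (τ : Equiv.Perm (Fin (2*m)))
    (h1 : ∀ t, ψ (xv (2*m) (τ t)) = ψ (xv (2*m) t) ∨ ψ (xv (2*m) (τ t)) = - ψ (xv (2*m) t))
    (a b : Fin (2*m)) : ψ (Np (2*m) (τ a) (τ b)) = ψ (Np (2*m) a b) := by
  simp only [Np, map_sub, map_pow, map_mul, map_add]
  rcases h1 a with ha | ha <;> rcases h1 b with hb | hb <;> rw [ha, hb] <;> ring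

lemma psi_Np_symm (ψ : R (2*m) →+* R') (a b : Fin (2*m)) :
    ψ (Np (2*m) a b) = ψ (Np (2*m) b a) := congrArg ψ (Np_symm _ a b)

lemma psi_U_tau (ψ : R (2*m) →+* R') (i j : Fin (2*m)) (hij : i ≠ j)
    (h1 : ∀ t, ψ (xv (2*m) ((Equiv.swap i j) t)) = ψ (xv (2*m) t)
        ∨ ψ (xv (2*m) ((Equiv.swap i j) t)) = - ψ (xv (2*m) t))
    (σ : Equiv.Perm (Fin (2*m))) :
    ψ (U m ((Equiv.swap i j) * σ)) = ψ (U m σ) := by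
  set τ := Equiv.swap i j with hτdef
  have expand : ∀ σ' : Equiv.Perm (Fin (2*m)), ψ (U m σ')
      = ∏ q ∈ pairs (2*m), (if matched m σ' (q.1, q.2) then 1 else ψ (Np (2*m) q.1 q.2)) := by
    intro σ'
    rw [U, map_prod]
    exact Finset.prod_congr rfl (fun q _ => by rw [apply_ite ψ, map_one])
  rw [expand, expand]
  have hsymm : ∀ a b : Fin (2*m),
      (if matched m (τ * σ) (a, b) then 1 else ψ (Np (2*m) a b))
        = (if matched m (τ * σ) (b, a) then 1 else ψ (Np (2*m) b a)) := by
    intro a b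
    exact if_congr (matched_pair_symm _ a b) rfl (psi_Np_symm ψ a b)
  calc ∏ q ∈ pairs (2*m), (if matched m (τ * σ) (q.1, q.2) then 1 else ψ (Np (2*m) q.1 q.2))
      = ∏ q ∈ pairs (2*m), (if matched m (τ * σ) (τ q.1, τ q.2) then 1
          else ψ (Np (2*m) (τ q.1) (τ q.2))) :=
        (prod_pairs_perm (fun a b => if matched m (τ * σ) (a, b) then 1 else ψ (Np (2*m) a b))
          hsymm τ).symm
    _ = ∏ q ∈ pairs (2*m), (if matched m σ (q.1, q.2) then 1 else ψ (Np (2*m) q.1 q.2)) := by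
        refine Finset.prod_congr rfl (fun q _ => ?_)
        exact if_congr (matched_tau σ τ q.1 q.2) rfl (psi_Np_tau ψ τ h1 q.1 q.2)

lemma psi_G_eq_zero (ψ : R (2*m) →+* R') (i j : Fin (2*m)) (hij : i ≠ j)
    (h1 : ∀ t, ψ (xv (2*m) ((Equiv.swap i j) t)) = ψ (xv (2*m) t)
        ∨ ψ (xv (2*m) ((Equiv.swap i j) t)) = - ψ (xv (2*m) t)) :
    ψ (G m) = 0 := by
  set τ := Equiv.swap i j with hτdef
  rw [G, map_sum]
  refine Finset.sum_ninvolution (fun σ => τ * σ) ?_ ?_ (fun _ => Finset.mem_univ _) ?_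
  · intro σ
    have hT : ψ (T m (τ * σ)) = ψ (T m σ) := by
      rw [T, T, map_mul, map_mul, psi_U_tau ψ i j hij h1 σ]
      congr 1
      rw [map_prod, map_prod]
      exact Finset.prod_congr rfl (fun k _ => by
        simpa only [Equiv.Perm.mul_apply] using psi_dp_tau ψ τ h1 (σ (i0 m k)) (σ (i1 m k)))
    have hsgn : ((Equiv.Perm.sign (τ * σ) : ℤ) : ℚ) = - ((Equiv.Perm.sign σ : ℤ) : ℚ) := by
      rw [Equiv.Perm.sign_mul, Equiv.Perm.sign_swap hij]
      push_cast
      ring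
    rw [map_mul, map_mul, hT, hsgn, map_neg, map_neg]
    ring
  · intro σ _ heq
    have hτ1 : τ = 1 := by
      have := congrArg (fun e => e * σ⁻¹) heq
      simpa [mul_assoc] using this
    have : τ i = i := by rw [hτ1]; rfl
    rw [hτdef, Equiv.swap_apply_left] at this
    exact hij this.symm
  · intro σ
    show τ * (τ * σ) = σ
    rw [← mul_assoc, Equiv.swap_mul_self, one_mul]

end Cancellation

section Divisibility

variable {L : ℕ}

def bc (b : Bool) : ℚ := if b then 1 else -1

lemma bc_sq (b : Bool) : bc b * bc b = 1 := by cases b <;> simp [bc]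

lemma bc_ne_zero (b : Bool) : bc b ≠ 0 := by cases b <;> simp [bc]

noncomputable def lf (L : ℕ) (x : (Fin L × Fin L) × Bool) : R L :=
  X (some x.1.1) - C (bc x.2) * X (some x.1.2)

lemma dp_factor (q : Fin L × Fin L) : dp L q.1 q.2 = lf L (q, true) * lf L (q, false) := by
  have h1 : (C (bc true) : R L) = 1 := by simp [bc]
  have h2 : (C (bc false) : R L) = -1 := by
    rw [show bc false = -1 from rfl, map_neg, map_one]
  simp only [lf, dp, xv, h1, h2]
  ring

lemma Dp_eq_prod_lf : Dp L = ∏ x ∈ pairs L ×ˢ (univ : Finset Bool), lf L x := by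
  rw [Finset.prod_product, Dp]
  refine Finset.prod_congr rfl (fun q _ => ?_)
  rw [dp_factor]
  simp

lemma aeval_lf (v : Option (Fin L) → ℚ) (q : Fin L × Fin L) (b : Bool) :
    aeval v (lf L (q, b)) = v (some q.1) - bc b * v (some q.2) := by
  simp [lf]

lemma lf_prime {q : Fin L × Fin L} (hq : q ∈ pairs L) (b : Bool) : Prime (lf L (q, b)) :=
  prime_lin (some q.1) (some q.2)
    (by simpa using (Fin.ne_of_lt (mem_pairs.1 hq)).symm) (bc b)

lemma lf_not_dvd {q q' : Fin L × Fin L} {b b' : Bool} (hq : q ∈ pairs L) (hq' : q' ∈ pairs L)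
    (hne : (q, b) ≠ (q', b')) : ¬ lf L (q, b) ∣ lf L (q', b') := by
  have hq12 := mem_pairs.1 hq
  have hq12' := mem_pairs.1 hq'
  rintro ⟨h, hh⟩
  by_cases hqq : q = q'
  · subst hqq
    have hbb : b ≠ b' := fun hb => hne (by rw [hb])
    set v : Option (Fin L) → ℚ :=
      fun s => if s = some q.1 then bc b else if s = some q.2 then 1 else 0 with hv
    have e1 : aeval v (lf L (q, b)) = 0 := by
      rw [aeval_lf]
      have : v (some q.1) = bc b := by simp [hv]
      have h2 : v (some q.2) = 1 := by
        simp [hv, (Fin.ne_of_lt hq12).symm]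
      rw [this, h2]; ring
    have e2 : aeval v (lf L (q, b')) ≠ 0 := by
      rw [aeval_lf]
      have : v (some q.1) = bc b := by simp [hv]
      have h2 : v (some q.2) = 1 := by
        simp [hv, (Fin.ne_of_lt hq12).symm]
      rw [this, h2, mul_one]
      cases b <;> cases b' <;> simp_all [bc] <;> norm_num
    apply e2
    rw [hh, map_mul, e1, zero_mul]
  · -- find a fresh variable among q'.1, q'.2
    have hfresh : (q'.1 ≠ q.1 ∧ q'.1 ≠ q.2) ∨ (q'.2 ≠ q.1 ∧ q'.2 ≠ q.2) := by
      by_cases c1 : q'.1 = q.1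
      · by_cases c2 : q'.2 = q.2
        · exact absurd (Prod.ext c1 c2).symm hqq
        · refine Or.inr ⟨?_, c2⟩
          rw [← c1]
          exact (Fin.ne_of_lt hq12').symm
      · by_cases c3 : q'.1 = q.2
        · refine Or.inr ⟨?_, ?_⟩
          · exact Fin.ne_of_gt (lt_trans hq12 (c3 ▸ hq12'))
          · exact Fin.ne_of_gt (c3 ▸ hq12')
        · exact Or.inl ⟨c1, c3⟩
    obtain ⟨h1, h2⟩ | ⟨h1, h2⟩ := hfresh
    · set v : Option (Fin L) → ℚ := fun s => if s = some q'.1 then 1 else 0 with hv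
      have e1 : aeval v (lf L (q, b)) = 0 := by
        rw [aeval_lf]
        have hA : v (some q.1) = 0 := by simp [hv, (Option.some_injective _).ne_iff.2 h1.symm, h1.symm]
        have hB : v (some q.2) = 0 := by simp [hv, h2.symm]
        rw [hA, hB]; ring
      have e2 : aeval v (lf L (q', b')) ≠ 0 := by
        rw [aeval_lf]
        have hA : v (some q'.1) = 1 := by simp [hv]
        have hB : v (some q'.2) = 0 := by
          simp [hv, (Fin.ne_of_lt hq12').symm]
        rw [hA, hB]; norm_num
      apply e2; rw [hh, map_mul, e1, zero_mul]
    · set v : Option (Fin L) → ℚ := fun s => if s = some q'.2 then 1 else 0 with hv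
      have e1 : aeval v (lf L (q, b)) = 0 := by
        rw [aeval_lf]
        have hA : v (some q.1) = 0 := by simp [hv, h1.symm]
        have hB : v (some q.2) = 0 := by simp [hv, h2.symm]
        rw [hA, hB]; ring
      have e2 : aeval v (lf L (q', b')) ≠ 0 := by
        rw [aeval_lf]
        have hA : v (some q'.1) = 0 := by simp [hv, Fin.ne_of_lt hq12']
        have hB : v (some q'.2) = 1 := by simp [hv]
        rw [hA, hB]
        simpa using bc_ne_zero b'
      apply e2; rw [hh, map_mul, e1, zero_mul]

end Divisibility

section DpDvdG

variable {m : ℕ}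

lemma lf_dvd_G {q : Fin (2*m) × Fin (2*m)} (hq : q ∈ pairs (2*m)) (b : Bool) :
    lf (2*m) (q, b) ∣ G m := by
  have hq12 := mem_pairs.1 hq
  have hne : (some q.2 : Option (Fin (2*m))) ≠ some q.1 := by
    simpa using (Fin.ne_of_lt hq12).symm
  set v0 : Option (Fin (2*m)) := some q.1 with hv0
  set r : MvPolynomial {t : Option (Fin (2*m)) // t ≠ v0} ℚ :=
    C (bc b) * X ⟨some q.2, hne⟩ with hr
  have hf : Ψ (2*m) v0 (lf (2*m) (q, b)) = Polynomial.X - Polynomial.C r := by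
    rw [lf, map_sub, map_mul, Psi_X_self, Psi_C, Psi_X_ne v0 (some q.2) hne, ← Polynomial.C_mul]
  rw [lin_dvd_iff v0 _ r hf]
  have hψ1 : ψs v0 r (xv (2*m) q.1) = C (bc b) * X ⟨some q.2, hne⟩ := by
    rw [xv, ← hv0, psi_X_self]
  have hψ2 : ψs v0 r (xv (2*m) q.2) = X ⟨some q.2, hne⟩ := by
    rw [xv, psi_X_ne v0 r (some q.2) hne]
  refine psi_G_eq_zero (ψs v0 r) q.1 q.2 (Fin.ne_of_lt hq12) (fun t => ?_)
  rcases eq_or_ne t q.1 with rfl | ht1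
  · rw [Equiv.swap_apply_left, hψ1, hψ2]
    cases b
    · right
      rw [show bc false = -1 from rfl, map_neg, map_one]
      ring
    · left
      rw [show bc true = 1 from rfl, map_one, one_mul]
  · rcases eq_or_ne t q.2 with rfl | ht2
    · rw [Equiv.swap_apply_right, hψ1, hψ2]
      cases b
      · right
        rw [show bc false = -1 from rfl, map_neg, map_one]
        ring
      · left
        rw [show bc true = 1 from rfl, map_one, one_mul]
    · rw [Equiv.swap_apply_of_ne_of_ne ht1 ht2]
      left; rfl

lemma Dp_dvd_G : Dp (2*m) ∣ G m := by
  rw [Dp_eq_prod_lf]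
  refine prod_primes_dvd' _ _ _ ?_ ?_ ?_
  · rintro ⟨q, b⟩ hx
    exact lf_prime (by simpa [Finset.mem_product] using (Finset.mem_product.1 hx).1) b
  · rintro ⟨q, b⟩ hx ⟨q', b'⟩ hx' hne
    exact lf_not_dvd (Finset.mem_product.1 hx).1 (Finset.mem_product.1 hx').1 hne
  · rintro ⟨q, b⟩ hx
    exact lf_dvd_G (Finset.mem_product.1 hx).1 b

end DpDvdG

section Fraction

variable {L : ℕ} {m : ℕ}

noncomputable def algK (L : ℕ) : R L →+* RatFld L := algebraMap (R L) (RatFld L)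

lemma algK_inj : Function.Injective (algK L) := IsFractionRing.injective _ _

lemma algK_ne_zero {f : R L} (h : f ≠ 0) : algK L f ≠ 0 := by
  rw [Ne, map_eq_zero_iff _ algK_inj]; exact h

lemma bFun_eq (i j : Fin L) :
    bFun L (zVar L i) (zVar L j) = algK L (Np L i j) / algK L (dp L i j) := by
  simp only [bFun, zVar, AVar, Np, dp, xv, av, algK, map_sub, map_add, map_mul, map_pow]

lemma bInv_eq (i j : Fin L) :
    (bFun L (zVar L i) (zVar L j))⁻¹ = algK L (dp L i j) / algK L (Np L i j) := by
  rw [bFun_eq, inv_div]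

/-- the product P over pairs -/
noncomputable def Pprod (L : ℕ) : RatFld L :=
  ∏ q ∈ pairs L, bFun L (zVar L q.1) (zVar L q.2)

lemma Pprod_eq : Pprod L
    = algK L (∏ q ∈ pairs L, Np L q.1 q.2) / algK L (∏ q ∈ pairs L, dp L q.1 q.2) := by
  rw [Pprod, map_prod, map_prod, ← Finset.prod_div_distrib]
  exact Finset.prod_congr rfl (fun q _ => bFun_eq q.1 q.2)

lemma per_sigma (σ : Equiv.Perm (Fin (2*m))) :
    Pprod (2*m) * (∏ k : Fin m, (bFun (2*m) (zVar (2*m) (σ (i0 m k))) (zVar (2*m) (σ (i1 m k))))⁻¹)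
      * algK (2*m) (Dp (2*m)) = algK (2*m) (T m σ) := by
  have hdPne : algK (2*m) (∏ q ∈ pairs (2*m), dp (2*m) q.1 q.2) ≠ 0 :=
    algK_ne_zero (by rw [← Dp]; exact Dp_ne_zero _)
  have hNσne : algK (2*m) (∏ k : Fin m, Np (2*m) (σ (i0 m k)) (σ (i1 m k))) ≠ 0 :=
    algK_ne_zero (Finset.prod_ne_zero_iff.2 (fun k _ => Np_ne_zero _ _ _))
  have h2 : ∏ k : Fin m, (bFun (2*m) (zVar (2*m) (σ (i0 m k))) (zVar (2*m) (σ (i1 m k))))⁻¹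
      = algK (2*m) (∏ k : Fin m, dp (2*m) (σ (i0 m k)) (σ (i1 m k)))
        / algK (2*m) (∏ k : Fin m, Np (2*m) (σ (i0 m k)) (σ (i1 m k))) := by
    rw [map_prod, map_prod, ← Finset.prod_div_distrib]
    exact Finset.prod_congr rfl (fun k _ => bInv_eq _ _)
  rw [Pprod_eq, h2, Dp, T, prod_Np_eq σ, map_mul, map_mul]
  have key : ∀ (bb cc u dd : RatFld (2*m)), bb ≠ 0 → cc ≠ 0 →
      (cc * u)/bb * (dd/cc) * bb = dd * u := by
    intros bb cc u dd hb hc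
    field_simp
  exact key _ _ _ _ hdPne hNσne

end Fraction

section MainEq

variable {m : ℕ}

lemma algK_C_int (L : ℕ) (n : ℤ) : algK L (C ((n : ℤ) : ℚ)) = ((n : ℤ) : RatFld L) := by
  rw [show (C ((n:ℤ):ℚ) : R L) = ((n : ℤ) : R L) from map_intCast (C : ℚ →+* R L) n]
  exact map_intCast (algK L) n

lemma main_eq (m : ℕ) :
    Pprod (2*m) * pfaffian (Matrix.of fun i j =>
        (bFun (2*m) (zVar (2*m) i) (zVar (2*m) j))⁻¹)
      * (((2^m * (Nat.factorial m) : ℕ) : RatFld (2*m)) * algK (2*m) (Dp (2*m)))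
      = algK (2*m) (G m) := by
  have hc : ((2^m * (Nat.factorial m) : ℕ) : RatFld (2*m)) ≠ 0 := by
    rw [Ne, Nat.cast_eq_zero]
    positivity
  rw [pfaffian]
  set c : RatFld (2*m) := ((2^m * (Nat.factorial m) : ℕ) : RatFld (2*m)) with hcdef
  set S := ∑ σ : Equiv.Perm (Fin (2*m)), ((Equiv.Perm.sign σ : ℤ) : RatFld (2*m)) *
      ∏ i : Fin m, (Matrix.of fun i j => (bFun (2*m) (zVar (2*m) i) (zVar (2*m) j))⁻¹)
        (σ ⟨2*(i : ℕ), by have := i.isLt; omega⟩)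
        (σ ⟨2*(i : ℕ) + 1, by have := i.isLt; omega⟩) with hS
  have step1 : Pprod (2*m) * (c⁻¹ * S) * (c * algK (2*m) (Dp (2*m)))
      = S * (Pprod (2*m) * algK (2*m) (Dp (2*m))) := by
    field_simp
  rw [step1, hS, Finset.sum_mul, G, map_sum]
  refine Finset.sum_congr rfl (fun σ _ => ?_)
  have hentry : ∀ k : Fin m,
      (Matrix.of fun i j => (bFun (2*m) (zVar (2*m) i) (zVar (2*m) j))⁻¹)
        (σ ⟨2*(k : ℕ), by have := k.isLt; omega⟩) (σ ⟨2*(k : ℕ) + 1, by have := k.isLt; omega⟩)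
      = (bFun (2*m) (zVar (2*m) (σ (i0 m k))) (zVar (2*m) (σ (i1 m k))))⁻¹ := fun k => rfl
  calc ((Equiv.Perm.sign σ : ℤ) : RatFld (2*m)) *
        (∏ k : Fin m, (Matrix.of fun i j => (bFun (2*m) (zVar (2*m) i) (zVar (2*m) j))⁻¹)
          (σ ⟨2*(k : ℕ), by have := k.isLt; omega⟩) (σ ⟨2*(k : ℕ) + 1, by have := k.isLt; omega⟩))
        * (Pprod (2*m) * algK (2*m) (Dp (2*m)))
      = ((Equiv.Perm.sign σ : ℤ) : RatFld (2*m)) *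
        (Pprod (2*m) * (∏ k : Fin m,
          (bFun (2*m) (zVar (2*m) (σ (i0 m k))) (zVar (2*m) (σ (i1 m k))))⁻¹)
          * algK (2*m) (Dp (2*m))) := by
        rw [Finset.prod_congr rfl (fun k _ => hentry k)]
        ring
    _ = ((Equiv.Perm.sign σ : ℤ) : RatFld (2*m)) * algK (2*m) (T m σ) := by rw [per_sigma σ]
    _ = algK (2*m) (C ((Equiv.Perm.sign σ : ℤ) : ℚ) * T m σ) := by
        rw [map_mul, algK_C_int]

end MainEq

section Symmetry

variable {L : ℕ} {m : ℕ}

noncomputable def Φm (L : ℕ) (σ : Equiv.Perm (Fin L)) : RatFld L ≃+* RatFld L :=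
  IsFractionRing.ringEquivOfRingEquiv (renameEquiv ℚ (Equiv.optionCongr σ)).toRingEquiv

lemma Phi_alg (σ : Equiv.Perm (Fin L)) (f : R L) :
    Φm L σ (algK L f) = algK L (rename (Equiv.optionCongr σ) f) := by
  simp [Φm, algK]

lemma Phi_z (σ : Equiv.Perm (Fin L)) (i : Fin L) :
    Φm L σ (zVar L i) = zVar L (σ i) := by
  rw [show zVar L i = algK L (X (some i)) from rfl, Phi_alg, rename_X]
  simp [zVar, algK]

lemma Phi_A (σ : Equiv.Perm (Fin L)) : Φm L σ (AVar L) = AVar L := by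
  rw [show AVar L = algK L (X none) from rfl, Phi_alg, rename_X]
  simp [AVar, algK]

lemma Phi_bFun (σ : Equiv.Perm (Fin L)) (u v : RatFld L) :
    Φm L σ (bFun L u v) = bFun L (Φm L σ u) (Φm L σ v) := by
  simp only [bFun, map_div₀, map_mul, map_sub, map_add, map_pow, Phi_A]

lemma eps_sq (σ : Equiv.Perm (Fin L)) :
    ((Equiv.Perm.sign σ : ℤ) : RatFld L) * ((Equiv.Perm.sign σ : ℤ) : RatFld L) = 1 := by
  rw [← Int.cast_mul, ← Units.val_mul, Int.units_mul_self]
  simp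

lemma Phi_Pprod (σ : Equiv.Perm (Fin L)) :
    Φm L σ (Pprod L) = ((Equiv.Perm.sign σ : ℤ) : RatFld L) * Pprod L := by
  set ε := ((Equiv.Perm.sign σ : ℤ) : RatFld L) with hε
  have hdsplit : ∀ a b : Fin L, algK L (dp L a b)
      = (algK L (xv L a) - algK L (xv L b)) * (algK L (xv L a) + algK L (xv L b)) := by
    intro a b
    rw [← map_sub, ← map_add, ← map_mul]
    congr 1
    unfold dp
    ring
  have hprod_d : ∀ τ : Equiv.Perm (Fin L), ∏ q ∈ pairs L, algK L (dp L (τ q.1) (τ q.2))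
      = ((Equiv.Perm.sign τ : ℤ) : RatFld L) * ∏ q ∈ pairs L, algK L (dp L q.1 q.2) := by
    intro τ
    calc ∏ q ∈ pairs L, algK L (dp L (τ q.1) (τ q.2))
        = (∏ q ∈ pairs L, (algK L (xv L (τ q.1)) - algK L (xv L (τ q.2))))
          * (∏ q ∈ pairs L, (algK L (xv L (τ q.1)) + algK L (xv L (τ q.2)))) := by
          rw [← Finset.prod_mul_distrib]
          exact Finset.prod_congr rfl (fun q _ => hdsplit (τ q.1) (τ q.2))
      _ = (((Equiv.Perm.sign τ : ℤ) : RatFld L) *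
            ∏ q ∈ pairs L, (algK L (xv L q.1) - algK L (xv L q.2)))
          * (∏ q ∈ pairs L, (algK L (xv L q.1) + algK L (xv L q.2))) := by
          rw [prod_pairs_sub_perm (fun t => algK L (xv L t)) τ,
            prod_pairs_perm (fun a b => algK L (xv L a) + algK L (xv L b))
              (fun a b => add_comm _ _) τ]
      _ = ((Equiv.Perm.sign τ : ℤ) : RatFld L) * ∏ q ∈ pairs L, algK L (dp L q.1 q.2) := by
          rw [mul_assoc, ← Finset.prod_mul_distrib]
          congr 1
          exact (Finset.prod_congr rfl (fun q _ => hdsplit q.1 q.2)).symm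
  have h1 : Φm L σ (Pprod L) = ∏ q ∈ pairs L, bFun L (zVar L (σ q.1)) (zVar L (σ q.2)) := by
    rw [Pprod, map_prod]
    exact Finset.prod_congr rfl (fun q _ => by rw [Phi_bFun, Phi_z, Phi_z])
  have h2 : ∏ q ∈ pairs L, bFun L (zVar L (σ q.1)) (zVar L (σ q.2))
      = (∏ q ∈ pairs L, algK L (Np L (σ q.1) (σ q.2)))
        / (∏ q ∈ pairs L, algK L (dp L (σ q.1) (σ q.2))) := by
    rw [← Finset.prod_div_distrib]
    exact Finset.prod_congr rfl (fun q _ => bFun_eq _ _)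
  have h3 : ∏ q ∈ pairs L, algK L (Np L (σ q.1) (σ q.2))
      = ∏ q ∈ pairs L, algK L (Np L q.1 q.2) :=
    prod_pairs_perm (fun a b => algK L (Np L a b))
      (fun a b => congrArg (algK L) (Np_symm L a b)) σ
  have hdenne : (∏ q ∈ pairs L, algK L (dp L q.1 q.2)) ≠ 0 :=
    Finset.prod_ne_zero_iff.2 (fun q hq =>
      algK_ne_zero (dp_ne_zero L (Fin.ne_of_lt (mem_pairs.1 hq))))
  have hεne : ε ≠ 0 := by
    intro h
    have := eps_sq σ
    rw [← hε] at this
    rw [h, mul_zero] at this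
    exact zero_ne_one this
  have hee : ε * ε = 1 := eps_sq σ
  rw [h1, h2, h3, hprod_d σ, ← hε]
  rw [Pprod_eq, map_prod, map_prod]
  rw [div_eq_iff (mul_ne_zero hεne hdenne)]
  rw [show ε * ((∏ q ∈ pairs L, algK L (Np L q.1 q.2)) / (∏ q ∈ pairs L, algK L (dp L q.1 q.2)))
        * (ε * ∏ q ∈ pairs L, algK L (dp L q.1 q.2))
      = (ε * ε) * (((∏ q ∈ pairs L, algK L (Np L q.1 q.2))
          / (∏ q ∈ pairs L, algK L (dp L q.1 q.2))) * (∏ q ∈ pairs L, algK L (dp L q.1 q.2)))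
    from by ring]
  rw [hee, one_mul, div_mul_cancel₀ _ hdenne]

end Symmetry

section PfaffianSym

variable {m : ℕ}

set_option maxHeartbeats 1000000 in
lemma Phi_pfaffian (σ : Equiv.Perm (Fin (2*m))) :
    Φm (2*m) σ (pfaffian (Matrix.of fun i j =>
        (bFun (2*m) (zVar (2*m) i) (zVar (2*m) j))⁻¹))
      = ((Equiv.Perm.sign σ : ℤ) : RatFld (2*m)) * pfaffian (Matrix.of fun i j =>
        (bFun (2*m) (zVar (2*m) i) (zVar (2*m) j))⁻¹) := by
  set ε := ((Equiv.Perm.sign σ : ℤ) : RatFld (2*m)) with hε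
  have hee : ε * ε = 1 := eps_sq σ
  rw [pfaffian, map_mul, map_inv₀, map_natCast, map_sum]
  rw [mul_left_comm ε]
  congr 1
  have hterm : ∀ π : Equiv.Perm (Fin (2*m)),
      Φm (2*m) σ (((Equiv.Perm.sign π : ℤ) : RatFld (2*m)) *
        ∏ k : Fin m, (Matrix.of fun i j => (bFun (2*m) (zVar (2*m) i) (zVar (2*m) j))⁻¹)
          (π ⟨2*(k : ℕ), by have := k.isLt; omega⟩) (π ⟨2*(k : ℕ) + 1, by have := k.isLt; omega⟩))
      = ε * (((Equiv.Perm.sign (σ * π) : ℤ) : RatFld (2*m)) *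
        ∏ k : Fin m, (Matrix.of fun i j => (bFun (2*m) (zVar (2*m) i) (zVar (2*m) j))⁻¹)
          ((σ * π) ⟨2*(k : ℕ), by have := k.isLt; omega⟩)
          ((σ * π) ⟨2*(k : ℕ) + 1, by have := k.isLt; omega⟩)) := by
    intro π
    rw [map_mul, map_intCast, map_prod]
    have hsg : ((Equiv.Perm.sign π : ℤ) : RatFld (2*m))
        = ε * ((Equiv.Perm.sign (σ * π) : ℤ) : RatFld (2*m)) := by
      rw [Equiv.Perm.sign_mul, Units.val_mul, Int.cast_mul, ← mul_assoc, ← hε, hee, one_mul]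
    rw [hsg, mul_assoc]
    congr 2
    refine Finset.prod_congr rfl (fun k _ => ?_)
    rw [show (Matrix.of fun i j => (bFun (2*m) (zVar (2*m) i) (zVar (2*m) j))⁻¹)
          (π ⟨2*(k : ℕ), by have := k.isLt; omega⟩) (π ⟨2*(k : ℕ) + 1, by have := k.isLt; omega⟩)
        = (bFun (2*m) (zVar (2*m) (π ⟨2*(k : ℕ), by have := k.isLt; omega⟩))
            (zVar (2*m) (π ⟨2*(k : ℕ) + 1, by have := k.isLt; omega⟩)))⁻¹ from rfl]
    rw [map_inv₀, Phi_bFun, Phi_z, Phi_z]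
    rfl
  rw [Finset.sum_congr rfl (fun π _ => hterm π), ← Finset.mul_sum]
  congr 1
  exact Fintype.sum_equiv (Equiv.mulLeft σ)
    (fun π => ((Equiv.Perm.sign (σ * π) : ℤ) : RatFld (2*m)) *
      ∏ k : Fin m, (Matrix.of fun i j => (bFun (2*m) (zVar (2*m) i) (zVar (2*m) j))⁻¹)
        ((σ * π) ⟨2*(k : ℕ), by have := k.isLt; omega⟩)
        ((σ * π) ⟨2*(k : ℕ) + 1, by have := k.isLt; omega⟩))
    (fun ρ => ((Equiv.Perm.sign ρ : ℤ) : RatFld (2*m)) *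
      ∏ k : Fin m, (Matrix.of fun i j => (bFun (2*m) (zVar (2*m) i) (zVar (2*m) j))⁻¹)
        (ρ ⟨2*(k : ℕ), by have := k.isLt; omega⟩)
        (ρ ⟨2*(k : ℕ) + 1, by have := k.isLt; omega⟩))
    (fun π => rfl)

lemma rename_p (σ : Equiv.Perm (Fin (2*m))) (p : R (2*m))
    (hp : algK (2*m) p = Pprod (2*m) * pfaffian (Matrix.of fun i j =>
        (bFun (2*m) (zVar (2*m) i) (zVar (2*m) j))⁻¹)) :
    rename (Option.map ⇑σ) p = p := by
  have h0 : Φm (2*m) σ (algK (2*m) p) = algK (2*m) p := by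
    rw [hp, map_mul, Phi_Pprod, Phi_pfaffian]
    rw [show ((Equiv.Perm.sign σ : ℤ) : RatFld (2*m)) * Pprod (2*m) *
          (((Equiv.Perm.sign σ : ℤ) : RatFld (2*m)) * pfaffian (Matrix.of fun i j =>
            (bFun (2*m) (zVar (2*m) i) (zVar (2*m) j))⁻¹))
        = (((Equiv.Perm.sign σ : ℤ) : RatFld (2*m)) * ((Equiv.Perm.sign σ : ℤ) : RatFld (2*m)))
          * (Pprod (2*m) * pfaffian (Matrix.of fun i j =>
            (bFun (2*m) (zVar (2*m) i) (zVar (2*m) j))⁻¹)) from by ring]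
    rw [eps_sq σ, one_mul]
  rw [Phi_alg] at h0
  have h1 : rename (⇑(Equiv.optionCongr σ)) p = p := algK_inj h0
  have h2 : (Option.map ⇑σ) = ⇑(Equiv.optionCongr σ) := by
    funext a
    cases a <;> simp
  rw [h2]
  exact h1

end PfaffianSym

end Stmt13

open Stmt13

/-- `b` is antisymmetric, and for `L = 2m` even the product
`Π_{i<j} b(z_i,z_j) · Pf[1/b(z_i,z_j)]` is a polynomial in `z_1,…,z_L, A`,
symmetric under all permutations of the `z_i`. -/
theorem stmt_13 (m : ℕ) (hm : 0 < m) :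
    (∀ x y : RatFld (2*m), bFun (2*m) x y = - bFun (2*m) y x) ∧
    (∃ p : MvPolynomial (Option (Fin (2*m))) ℚ,
      (∏ q ∈ Finset.univ.filter (fun q : Fin (2*m) × Fin (2*m) => q.1 < q.2),
          bFun (2*m) (zVar (2*m) q.1) (zVar (2*m) q.2)) *
        pfaffian (Matrix.of fun i j => (bFun (2*m) (zVar (2*m) i) (zVar (2*m) j))⁻¹)
        = algebraMap (MvPolynomial (Option (Fin (2*m))) ℚ) (RatFld (2*m)) p ∧
      ∀ σ : Equiv.Perm (Fin (2*m)), rename (Option.map σ) p = p) := by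
  constructor
  · intro x y
    have hnum : ((AVar (2*m))^2 - (x - y)^2) * ((AVar (2*m))^2 - (x + y)^2)
        = ((AVar (2*m))^2 - (y - x)^2) * ((AVar (2*m))^2 - (y + x)^2) := by ring
    rw [bFun, bFun, hnum, show (x^2 - y^2 : RatFld (2*m)) = -(y^2 - x^2) from by ring, div_neg]
  · obtain ⟨p₀, hp₀⟩ := Dp_dvd_G (m := m)
    have hc' : ((2^m * Nat.factorial m : ℕ) : ℚ) ≠ 0 := Nat.cast_ne_zero.2 (by positivity)
    have hcK : ((2^m * Nat.factorial m : ℕ) : RatFld (2*m)) ≠ 0 :=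
      Nat.cast_ne_zero.2 (by positivity)
    have hDK : algK (2*m) (Dp (2*m)) ≠ 0 := algK_ne_zero (Dp_ne_zero _)
    have hcc : algK (2*m) (C (((2^m * Nat.factorial m : ℕ) : ℚ)⁻¹))
        * ((2^m * Nat.factorial m : ℕ) : RatFld (2*m)) = 1 := by
      have h1 : ((2^m * Nat.factorial m : ℕ) : RatFld (2*m))
          = algK (2*m) (C (((2^m * Nat.factorial m : ℕ) : ℚ))) := by
        rw [show (C (((2^m * Nat.factorial m : ℕ) : ℚ)) : R (2*m))
            = ((2^m * Nat.factorial m : ℕ) : R (2*m)) from map_natCast (C : ℚ →+* R (2*m)) _]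
        exact (map_natCast (algK (2*m)) _).symm
      rw [h1, ← map_mul, ← C_mul, inv_mul_cancel₀ hc']
      simp
    have hmain : Pprod (2*m) * pfaffian (Matrix.of fun i j =>
          (bFun (2*m) (zVar (2*m) i) (zVar (2*m) j))⁻¹)
        = algK (2*m) (C (((2^m * Nat.factorial m : ℕ) : ℚ)⁻¹) * p₀) := by
      apply mul_right_cancel₀ (b := ((2^m * Nat.factorial m : ℕ) : RatFld (2*m))
        * algK (2*m) (Dp (2*m))) (mul_ne_zero hcK hDK)
      rw [main_eq m, hp₀, map_mul, map_mul]
      calc algK (2*m) (Dp (2*m)) * algK (2*m) p₀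
          = (algK (2*m) (C (((2^m * Nat.factorial m : ℕ) : ℚ)⁻¹))
              * ((2^m * Nat.factorial m : ℕ) : RatFld (2*m))) *
            (algK (2*m) (Dp (2*m)) * algK (2*m) p₀) := by rw [hcc, one_mul]
        _ = algK (2*m) (C (((2^m * Nat.factorial m : ℕ) : ℚ)⁻¹)) * algK (2*m) p₀ *
            (((2^m * Nat.factorial m : ℕ) : RatFld (2*m)) * algK (2*m) (Dp (2*m))) := by ring
    refine ⟨C (((2^m * Nat.factorial m : ℕ) : ℚ)⁻¹) * p₀, ?_, ?_⟩
    · exact hmain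
    · intro σ
      exact rename_p σ _ hmain.symm
end
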